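/- For every t = 0,…,T−1, the function H*_t attains its minimum over ℝ, and its smallest minimizer S*_t := min{ x : H*_t(x) = min_{y∈ℝ} H*_t(y) } satisfies S*_t ≤ S^U_t. -/

import Mathlib

open MeasureTheory Filter Set Topology


/-- A lower semicontinuous coercive function on ℝ has a least global minimizer. -/
lemma lsc_isLeast_min (f : ℝ → ℝ) (hf : LowerSemicontinuous f)
    (hcoer : Filter.Tendsto f (Filter.cocompact ℝ) Filter.atTop) :
    ∃ S : ℝ, IsLeast {x | ∀ y, f x ≤ f y} S := by
  have hcl : ∀ b : ℝ, IsClosed {x | f x ≤ b} := fun b =>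
    lowerSemicontinuous_iff_isClosed_preimage.1 hf b
  obtain ⟨s, hs, hsub⟩ : ∃ s : Set ℝ, IsCompact s ∧ ∀ x ∉ s, f 0 + 1 ≤ f x := by
    obtain ⟨t, htc, hts⟩ := mem_cocompact.1 (hcoer.eventually (eventually_ge_atTop (f 0 + 1)))
    exact ⟨t, htc, fun x hx => hts hx⟩
  set A : Set ℝ := {x | f x ≤ f 0} with hA
  have h0A : (0 : ℝ) ∈ A := by simp [hA]
  have hAs : A ⊆ s := by
    intro x hx
    by_contra hxs
    have := hsub x hxs
    have : f 0 + 1 ≤ f 0 := le_trans this hx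
    linarith
  have hAc : IsCompact A := hs.of_isClosed_subset (hcl (f 0)) hAs
  have hAne : A.Nonempty := ⟨0, h0A⟩
  haveI : Nonempty A := hAne.to_subtype
  have key : ∃ x ∈ A, ∀ y ∈ A, f x ≤ f y := by
    have hdir : Directed (· ⊇ ·) (fun i : A => A ∩ {x | f x ≤ f (i : ℝ)}) := by
      intro i j
      rcases le_total (f (i : ℝ)) (f (j : ℝ)) with h | h
      · exact ⟨i, subset_rfl, inter_subset_inter_right _ (fun x hx => le_trans hx h)⟩
      · exact ⟨j, inter_subset_inter_right _ (fun x hx => le_trans hx h), subset_rfl⟩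
    have hne : ∀ i : A, (A ∩ {x | f x ≤ f (i : ℝ)}).Nonempty :=
      fun i => ⟨(i : ℝ), i.2, show f (i : ℝ) ≤ f (i : ℝ) from le_rfl⟩
    have hcpt : ∀ i : A, IsCompact (A ∩ {x | f x ≤ f (i : ℝ)}) :=
      fun i => hAc.of_isClosed_subset ((hcl (f 0)).inter (hcl _)) inter_subset_left
    have hclosed : ∀ i : A, IsClosed (A ∩ {x | f x ≤ f (i : ℝ)}) :=
      fun i => (hcl (f 0)).inter (hcl _)
    obtain ⟨x, hx⟩ := IsCompact.nonempty_iInter_of_directed_nonempty_isCompact_isClosed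
      _ hdir hne hcpt hclosed
    simp only [mem_iInter, mem_inter_iff] at hx
    exact ⟨x, (hx ⟨0, h0A⟩).1, fun y hy => (hx ⟨y, hy⟩).2⟩
  obtain ⟨x, hxA, hxmin⟩ := key
  have hxglob : ∀ y, f x ≤ f y := by
    intro y
    by_cases hy : y ∈ A
    · exact hxmin y hy
    · have h1 : f 0 < f y := not_le.1 hy
      have h2 : f x ≤ f 0 := hxA
      linarith
  have hMcl : IsClosed {x | ∀ y, f x ≤ f y} := by
    have hM : {x | ∀ y, f x ≤ f y} = ⋂ y, {x : ℝ | f x ≤ f y} := by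
      ext z; simp [mem_iInter]
    rw [hM]; exact isClosed_iInter fun y => hcl (f y)
  have hMbdd : BddBelow {x | ∀ y, f x ≤ f y} :=
    BddBelow.mono (fun z hz => hAs (le_trans (hz 0) le_rfl)) hs.bddBelow
  exact ⟨sInf _, hMcl.csInf_mem ⟨x, hxglob⟩ hMbdd,
    fun y hy => csInf_le hMbdd hy⟩


section PhiLemmas

variable (μ : Measure ℝ) [IsProbabilityMeasure μ] (V : ℝ → ℝ)
  (hV : LowerSemicontinuous V) (c : ℝ) (hc : ∀ x, c ≤ V x)
  (κ : ℝ) (hκ0 : 0 ≤ κ) (hκ : ∀ b a : ℝ, b ≤ a → V b ≤ κ + V a)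
  (hae0 : ∀ᵐ ξ ∂μ, 0 ≤ ξ)

include hV hc hκ0 hκ hae0

lemma phi_int : ∀ y : ℝ, Integrable (fun ξ => V (y - ξ)) μ := by
  intro y
  have hmeas : Measurable (fun ξ : ℝ => V (y - ξ)) :=
    hV.measurable.comp (measurable_const.sub measurable_id)
  refine Integrable.mono' (integrable_const (max |c| |κ + V y|)) hmeas.aestronglyMeasurable ?_
  filter_upwards [hae0] with ξ hξ
  have h1 : c ≤ V (y - ξ) := hc _
  have h2 : V (y - ξ) ≤ κ + V y := hκ _ _ (by linarith)
  rw [Real.norm_eq_abs, abs_le]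
  constructor
  · have : -|c| ≤ c := neg_abs_le c
    have := le_max_left |c| |κ + V y|
    linarith
  · have : κ + V y ≤ |κ + V y| := le_abs_self _
    have := le_max_right |c| |κ + V y|
    linarith

lemma phi_lb : ∀ y : ℝ, c ≤ ∫ ξ, V (y - ξ) ∂μ := by
  intro y
  have h := integral_mono_ae (integrable_const c) (phi_int μ V hV c hc κ hκ0 hκ hae0 y)
    (Eventually.of_forall fun ξ => hc (y - ξ))
  simpa using h

lemma phi_kappa : ∀ b a : ℝ, b ≤ a → (∫ ξ, V (b - ξ) ∂μ) ≤ κ + ∫ ξ, V (a - ξ) ∂μ := by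
  intro b a hba
  have hib := phi_int μ V hV c hc κ hκ0 hκ hae0 b
  have hia := phi_int μ V hV c hc κ hκ0 hκ hae0 a
  have hia' : Integrable (fun ξ => κ + V (a - ξ)) μ := (integrable_const κ).add hia
  have h := integral_mono_ae hib hia'
    (Eventually.of_forall fun ξ => hκ (b - ξ) (a - ξ) (by linarith))
  rw [integral_add (integrable_const κ) hia] at h
  simpa using h

lemma phi_lsc : LowerSemicontinuous (fun y => ∫ ξ, V (y - ξ) ∂μ) := by
  set φ : ℝ → ℝ := fun y => ∫ ξ, V (y - ξ) ∂μ with hφ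
  intro y z hz
  by_contra hcon
  rw [Filter.not_eventually] at hcon
  -- extract a sequence u n → y with φ (u n) ≤ z
  haveI hNeBot : (𝓝 y ⊓ 𝓟 {y' | ¬ z < φ y'}).NeBot :=
    Filter.frequently_iff_neBot.mp hcon
  obtain ⟨u, hu⟩ := Filter.exists_seq_tendsto (𝓝 y ⊓ 𝓟 {y' | ¬ z < φ y'})
  have hu1 : Filter.Tendsto u atTop (𝓝 y) := hu.mono_right inf_le_left
  have hu2 : ∀ᶠ n in atTop, φ (u n) ≤ z := by
    have := hu.mono_right inf_le_right
    rw [Filter.tendsto_principal] at this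
    exact this.mono fun n hn => not_lt.1 hn
  -- basic facts
  have hzc : c ≤ z := by
    obtain ⟨n, hn⟩ := hu2.exists
    exact le_trans (phi_lb μ V hV c hc κ hκ0 hκ hae0 (u n)) hn
  -- Fatou argument
  have hmeasg : ∀ w : ℝ, Measurable fun ξ : ℝ => ENNReal.ofReal (V (w - ξ) - c) :=
    fun w => ENNReal.measurable_ofReal.comp
      ((hV.measurable.comp (measurable_const.sub measurable_id)).sub measurable_const)
  have hpt : ∀ ξ : ℝ, ENNReal.ofReal (V (y - ξ) - c) ≤
      Filter.liminf (fun n => ENNReal.ofReal (V (u n - ξ) - c)) atTop := by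
    intro ξ
    rw [Filter.le_liminf_iff]
    intro w hw
    have hwtop : w ≠ ⊤ := hw.ne_top
    rw [ENNReal.lt_ofReal_iff_toReal_lt hwtop] at hw
    have hlsc := hV (y - ξ) (w.toReal + c) (by linarith)
    have htend : Filter.Tendsto (fun n => u n - ξ) atTop (𝓝 (y - ξ)) :=
      hu1.sub tendsto_const_nhds
    filter_upwards [htend.eventually hlsc] with n hn
    rw [ENNReal.lt_ofReal_iff_toReal_lt hwtop]
    linarith
  have step1 : ENNReal.ofReal (φ y - c) ≤ Filter.liminf (fun n => ENNReal.ofReal (φ (u n) - c)) atTop := by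
    have hinty := phi_int μ V hV c hc κ hκ0 hκ hae0 y
    have e1 : ENNReal.ofReal (φ y - c) = ∫⁻ ξ, ENNReal.ofReal (V (y - ξ) - c) ∂μ := by
      have hint' : Integrable (fun ξ => V (y - ξ) - c) μ := hinty.sub (integrable_const c)
      rw [← ofReal_integral_eq_lintegral_ofReal hint'
        (Eventually.of_forall fun ξ => by simpa using hc (y - ξ))]
      congr 1
      rw [integral_sub hinty (integrable_const c)]
      simp [hφ]
    have e2 : ∀ n, ENNReal.ofReal (φ (u n) - c) = ∫⁻ ξ, ENNReal.ofReal (V (u n - ξ) - c) ∂μ := by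
      intro n
      have hint := phi_int μ V hV c hc κ hκ0 hκ hae0 (u n)
      have hint' : Integrable (fun ξ => V (u n - ξ) - c) μ := hint.sub (integrable_const c)
      rw [← ofReal_integral_eq_lintegral_ofReal hint'
        (Eventually.of_forall fun ξ => by simpa using hc (u n - ξ))]
      congr 1
      rw [integral_sub hint (integrable_const c)]
      simp [hφ]
    rw [e1]
    calc ∫⁻ ξ, ENNReal.ofReal (V (y - ξ) - c) ∂μ
        ≤ ∫⁻ ξ, Filter.liminf (fun n => ENNReal.ofReal (V (u n - ξ) - c)) atTop ∂μ :=
          lintegral_mono hpt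
      _ ≤ Filter.liminf (fun n => ∫⁻ ξ, ENNReal.ofReal (V (u n - ξ) - c) ∂μ) atTop :=
          lintegral_liminf_le (fun n => hmeasg (u n))
      _ = Filter.liminf (fun n => ENNReal.ofReal (φ (u n) - c)) atTop := by
          simp_rw [← e2]
  have step2 : Filter.liminf (fun n => ENNReal.ofReal (φ (u n) - c)) atTop ≤
      ENNReal.ofReal (z - c) := by
    apply liminf_le_of_frequently_le'
    exact (hu2.mono fun n hn => ENNReal.ofReal_le_ofReal (by linarith)).frequently
  have := le_trans step1 step2
  rw [ENNReal.ofReal_le_ofReal_iff (by linarith)] at this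
  exact absurd hz (by push_neg; linarith)

end PhiLemmas


lemma V_facts (Hf : ℝ → ℝ) (cH : ℝ) (hcH : ∀ y, cH ≤ Hf y) (Kc : ℝ) (hK : 0 ≤ Kc)
    (hH : LowerSemicontinuous Hf) (Vt : ℝ → ℝ)
    (hVt : ∀ x, Vt x = sInf ((fun y => Kc * (if x < y then (1 : ℝ) else 0) + Hf y) '' Set.Ici x)) :
    LowerSemicontinuous Vt ∧ (∀ x, cH ≤ Vt x) ∧ (∀ b a : ℝ, b ≤ a → Vt b ≤ Kc + Vt a) := by
  have hlbset : ∀ x : ℝ, ∀ w ∈ (fun y => Kc * (if x < y then (1 : ℝ) else 0) + Hf y) '' Set.Ici x,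
      cH ≤ w := by
    rintro x w ⟨y, _, rfl⟩
    have h1 : 0 ≤ Kc * (if x < y then (1 : ℝ) else 0) := by
      split <;> simp [hK]
    have := hcH y
    simp only []
    linarith
  have hbdd : ∀ x : ℝ, BddBelow ((fun y => Kc * (if x < y then (1 : ℝ) else 0) + Hf y) '' Set.Ici x) :=
    fun x => ⟨cH, fun w hw => hlbset x w hw⟩
  have hne : ∀ x : ℝ, ((fun y => Kc * (if x < y then (1 : ℝ) else 0) + Hf y) '' Set.Ici x).Nonempty :=
    fun x => ⟨_, ⟨x, self_mem_Ici, rfl⟩⟩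
  have hlb : ∀ x, cH ≤ Vt x := by
    intro x
    rw [hVt x]
    exact le_csInf (hne x) (hlbset x)
  have hbddH : ∀ x : ℝ, BddBelow (Hf '' Set.Ioi x) := fun x => ⟨cH, by rintro w ⟨y, _, rfl⟩; exact hcH y⟩
  have hneH : ∀ x : ℝ, (Hf '' Set.Ioi x).Nonempty := fun x => ⟨_, ⟨x + 1, by simp, rfl⟩⟩
  -- representation
  have hrepr : ∀ x : ℝ, Vt x = min (Hf x) (Kc + sInf (Hf '' Set.Ioi x)) := by
    intro x
    apply le_antisymm
    · apply le_min
      · rw [hVt x]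
        have : Hf x = Kc * (if x < x then (1 : ℝ) else 0) + Hf x := by simp
        rw [this]
        exact csInf_le (hbdd x) ⟨x, self_mem_Ici, rfl⟩
      · have h1 : Vt x - Kc ≤ sInf (Hf '' Set.Ioi x) := by
          apply le_csInf (hneH x)
          rintro w ⟨y, hy, rfl⟩
          have : Vt x ≤ Kc * (if x < y then (1 : ℝ) else 0) + Hf y := by
            rw [hVt x]
            exact csInf_le (hbdd x) ⟨y, Set.mem_Ici.2 (le_of_lt hy), rfl⟩
          rw [if_pos (Set.mem_Ioi.1 hy)] at this
          linarith
        linarith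
    · rw [hVt x]
      apply le_csInf (hne x)
      rintro w ⟨y, hy, rfl⟩
      by_cases hxy : x < y
      · have h2 : sInf (Hf '' Set.Ioi x) ≤ Hf y := csInf_le (hbddH x) ⟨y, hxy, rfl⟩
        have := min_le_right (Hf x) (Kc + sInf (Hf '' Set.Ioi x))
        simp only [if_pos hxy]
        linarith
      · have hxy' : y = x := le_antisymm (not_lt.1 hxy) hy
        subst hxy'
        have := min_le_left (Hf y) (Kc + sInf (Hf '' Set.Ioi y))
        simp only [if_neg hxy]
        linarith
  -- kappa inequality
  have hkineq : ∀ b a : ℝ, b ≤ a → Vt b ≤ Kc + Vt a := by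
    intro b a hba
    have : Vt b - Kc ≤ Vt a := by
      rw [hVt a]
      apply le_csInf (hne a)
      rintro w ⟨y, hy, rfl⟩
      have hyb : y ∈ Set.Ici b := le_trans hba hy
      have h1 : Vt b ≤ Kc * (if b < y then (1 : ℝ) else 0) + Hf y := by
        rw [hVt b]
        exact csInf_le (hbdd b) ⟨y, hyb, rfl⟩
      have h2 : Kc * (if b < y then (1 : ℝ) else 0) ≤ Kc := by
        split <;> simp [hK]
      have h3 : 0 ≤ Kc * (if a < y then (1 : ℝ) else 0) := by
        split <;> simp [hK]
      simp only []
      linarith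
    linarith
  refine ⟨?_, hlb, hkineq⟩
  -- lower semicontinuity
  intro x z hz
  rw [hrepr x] at hz
  obtain ⟨w, hzw, hwV⟩ := exists_between hz
  have hwH : w < Hf x := lt_of_lt_of_le hwV (min_le_left _ _)
  have hwW : w ≤ Kc + sInf (Hf '' Set.Ioi x) := le_trans (le_of_lt hwV) (min_le_right _ _)
  obtain ⟨δ, hδ, hball⟩ := Metric.mem_nhds_iff.1 (hH x w hwH)
  have hmain : ∀ x' ∈ Metric.ball x δ, z < Vt x' := by
    intro x' hx'
    rw [hrepr x']
    apply lt_min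
    · exact lt_trans hzw (hball hx')
    · have hWlb : w - Kc ≤ sInf (Hf '' Set.Ioi x') := by
        apply le_csInf (hneH x')
        rintro v ⟨y, hy, rfl⟩
        by_cases hyx : y ≤ x
        · have hyball : y ∈ Metric.ball x δ := by
            rw [Metric.mem_ball] at hx' ⊢
            rw [Real.dist_eq] at hx' ⊢
            rw [abs_lt] at hx' ⊢
            rw [Set.mem_Ioi] at hy
            constructor <;> linarith [hx'.1, hx'.2]
          have hw2 : w < Hf y := hball hyball
          linarith
        · push_neg at hyx
          have h2 : sInf (Hf '' Set.Ioi x) ≤ Hf y := csInf_le (hbddH x) ⟨y, hyx, rfl⟩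
          linarith
      linarith
  exact Filter.eventually_iff_exists_mem.2 ⟨Metric.ball x δ, Metric.ball_mem_nhds x hδ, hmain⟩

theorem stmt13
    (T : ℕ) (hT : 2 ≤ T)
    (α : ℝ) (hα0 : 0 < α) (hα1 : α ≤ 1)
    (K : ℕ → ℝ) (hK0 : ∀ t, t < T → 0 ≤ K t)
    (hKmono : ∀ t, t + 2 ≤ T → α * K (t + 1) ≤ K t)
    (ν : ℕ → MeasureTheory.Measure ℝ)
    (hprob : ∀ t, MeasureTheory.IsProbabilityMeasure (ν t))
    (hpos : ∀ t, ν t (Set.Iio 0) = 0)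
    (F : ℕ → ℝ → ℝ) (hF : ∀ t x, F t x = (ν t (Set.Iic x)).toReal)
    (C : ℕ → ℝ → ℝ)
    (hCconv : ∀ t, t < T → ConvexOn ℝ Set.univ (C t))
    (hCcoer : ∀ t, t < T → Filter.Tendsto (C t) (Filter.cocompact ℝ) Filter.atTop)
    (Hstar Vstar : ℕ → ℝ → ℝ)
    (hVstarT : ∀ x, Vstar T x = 0)
    (hHstar : ∀ t, t < T → ∀ y,
      Hstar t y = C t y + α * ∫ ξ, Vstar (t + 1) (y - ξ) ∂(ν t))
    (hVstar : ∀ t, t < T → ∀ x,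
      Vstar t x = sInf ((fun y => K t * (if x < y then (1 : ℝ) else 0) + Hstar t y) '' Set.Ici x))
    (θ : ℝ) (hθ : 0 < θ)
    (f : ℕ → ℤ → ℝ)
    (hf : ∀ t (n : ℤ), f t n = F t (((n : ℝ) + 1) * θ) - F t ((n : ℝ) * θ))
    (Cm SU : ℕ → ℝ)
    (hCm : ∀ t, t < T → IsLeast {x | ∀ y, C t x ≤ C t y} (Cm t))
    (hSU : ∀ t, t < T → ∀ n0 : ℤ, (n0 : ℝ) * θ < Cm t → Cm t ≤ ((n0 : ℝ) + 1) * θ →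
      IsLeast {w | (∃ m : ℤ, w = (m : ℝ) * θ) ∧ Cm t ≤ w ∧ C t ((n0 : ℝ) * θ) + K t < C t w} (SU t))
    :
    ∀ t, t < T → ∃ Sst : ℝ, IsLeast {x | ∀ y, Hstar t x ≤ Hstar t y} Sst ∧ Sst ≤ SU t := by
  have hae0 : ∀ t : ℕ, ∀ᵐ ξ ∂ν t, 0 ≤ ξ := by
    intro t
    rw [ae_iff]
    have hset : {ξ : ℝ | ¬ 0 ≤ ξ} = Set.Iio 0 := by ext ξ; simp
    rw [hset]
    exact hpos t
  have Ccont : ∀ t, t < T → Continuous (C t) := by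
    intro t ht
    have h := (hCconv t ht).continuousOn isOpen_univ
    exact continuousOn_univ.mp h
  have goodV : ∀ d t : ℕ, t + d = T →
      (LowerSemicontinuous (Vstar t) ∧ (∃ c : ℝ, ∀ x, c ≤ Vstar t x) ∧
        (∀ b a : ℝ, b ≤ a → Vstar t b ≤ (if t < T then K t else 0) + Vstar t a)) ∧
      (t < T → LowerSemicontinuous (Hstar t) ∧
        Filter.Tendsto (Hstar t) (Filter.cocompact ℝ) Filter.atTop ∧
        (∀ b a : ℝ, b ≤ a → Hstar t b - C t b ≤ K t + (Hstar t a - C t a))) := by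
    intro d
    induction d with
    | zero =>
      intro t htd
      have htT : t = T := by omega
      subst htT
      have hVeq : Vstar t = fun _ => (0 : ℝ) := funext hVstarT
      refine ⟨⟨?_, ⟨0, fun x => by rw [hVstarT]⟩, ?_⟩, fun h => absurd h (lt_irrefl _)⟩
      · rw [hVeq]; exact lowerSemicontinuous_const
      · intro b a hba
        rw [hVstarT, hVstarT, if_neg (lt_irrefl _)]
        norm_num
    | succ d ih =>
      intro t htd
      have ht : t < T := by omega
      obtain ⟨⟨lsc1, ⟨c, hc⟩, hκi⟩, _⟩ := ih (t + 1) (by omega)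
      haveI := hprob t
      set κ : ℝ := if t + 1 < T then K (t + 1) else 0 with hκdef
      have hκ0 : 0 ≤ κ := by
        rw [hκdef]; split
        · exact hK0 _ ‹_›
        · exact le_rfl
      have hκV : ∀ b a : ℝ, b ≤ a → Vstar (t + 1) b ≤ κ + Vstar (t + 1) a := hκi
      have hφlb := phi_lb (ν t) (Vstar (t + 1)) lsc1 c hc κ hκ0 hκV (hae0 t)
      have hφκ := phi_kappa (ν t) (Vstar (t + 1)) lsc1 c hc κ hκ0 hκV (hae0 t)
      have hφlsc := phi_lsc (ν t) (Vstar (t + 1)) lsc1 c hc κ hκ0 hκV (hae0 t)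
      have hHeq : Hstar t = fun y => C t y + α * ∫ ξ, Vstar (t + 1) (y - ξ) ∂ν t :=
        funext (hHstar t ht)
      have hαφ : LowerSemicontinuous (fun y => α * ∫ ξ, Vstar (t + 1) (y - ξ) ∂ν t) := by
        intro x z hz
        simp only [] at hz
        have h1 : z / α < ∫ ξ, Vstar (t + 1) (x - ξ) ∂ν t := by
          rw [div_lt_iff₀ hα0, mul_comm]
          exact hz
        filter_upwards [hφlsc x (z / α) h1] with y hy
        have h2 := (div_lt_iff₀ hα0).1 hy
        rw [mul_comm] at h2
        exact h2
      have hHlsc : LowerSemicontinuous (Hstar t) := by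
        rw [hHeq]
        exact ((Ccont t ht).lowerSemicontinuous).add hαφ
      have hHlb : ∀ y, C t (Cm t) + α * c ≤ Hstar t y := by
        intro y
        rw [hHstar t ht y]
        have h1 : C t (Cm t) ≤ C t y := (hCm t ht).1 y
        have h2 := mul_le_mul_of_nonneg_left (hφlb y) hα0.le
        linarith
      have hHcoer : Filter.Tendsto (Hstar t) (Filter.cocompact ℝ) Filter.atTop := by
        have h1 : Filter.Tendsto (fun y => C t y + α * c) (Filter.cocompact ℝ) Filter.atTop :=
          Filter.tendsto_atTop_add_const_right _ _ (hCcoer t ht)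
        apply Filter.tendsto_atTop_mono _ h1
        intro y
        rw [hHstar t ht y]
        have h2 := mul_le_mul_of_nonneg_left (hφlb y) hα0.le
        linarith
      have hHK : ∀ b a : ℝ, b ≤ a → Hstar t b - C t b ≤ K t + (Hstar t a - C t a) := by
        intro b a hba
        rw [hHstar t ht a, hHstar t ht b]
        have h1 := mul_le_mul_of_nonneg_left (hφκ b a hba) hα0.le
        have h2 : α * (κ + ∫ ξ, Vstar (t + 1) (a - ξ) ∂ν t) =
            α * κ + α * ∫ ξ, Vstar (t + 1) (a - ξ) ∂ν t := by ring
        have hακ : α * κ ≤ K t := by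
          rw [hκdef]
          split
          · exact hKmono t (by omega)
          · simpa using hK0 t ht
        rw [h2] at h1
        linarith
      have hVf := V_facts (Hstar t) (C t (Cm t) + α * c) hHlb (K t) (hK0 t ht) hHlsc
        (Vstar t) (hVstar t ht)
      exact ⟨⟨hVf.1, ⟨_, hVf.2.1⟩, by rw [if_pos ht]; exact hVf.2.2⟩,
        fun _ => ⟨hHlsc, hHcoer, hHK⟩⟩
  intro t ht
  obtain ⟨_, hHfacts⟩ := goodV (T - t) t (by omega)
  obtain ⟨hHlsc, hHcoer, hHK⟩ := hHfacts ht
  obtain ⟨S, hS⟩ := lsc_isLeast_min (Hstar t) hHlsc hHcoer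
  refine ⟨S, hS, ?_⟩
  set n0 : ℤ := ⌈Cm t / θ⌉ - 1 with hn0
  have h1 : (n0 : ℝ) * θ < Cm t := by
    have hceil : (⌈Cm t / θ⌉ : ℝ) < Cm t / θ + 1 := Int.ceil_lt_add_one _
    have hcast : ((n0 : ℤ) : ℝ) = (⌈Cm t / θ⌉ : ℝ) - 1 := by
      rw [hn0]; push_cast; ring
    rw [hcast]
    have h2 : (⌈Cm t / θ⌉ : ℝ) - 1 < Cm t / θ := by linarith
    calc ((⌈Cm t / θ⌉ : ℝ) - 1) * θ < (Cm t / θ) * θ := mul_lt_mul_of_pos_right h2 hθ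
      _ = Cm t := by field_simp
  have h2 : Cm t ≤ ((n0 : ℝ) + 1) * θ := by
    have hle : Cm t / θ ≤ (⌈Cm t / θ⌉ : ℝ) := Int.le_ceil _
    have hcast : ((n0 : ℝ) + 1) = (⌈Cm t / θ⌉ : ℝ) := by
      rw [hn0]; push_cast; ring
    rw [hcast]
    calc Cm t = (Cm t / θ) * θ := by field_simp
      _ ≤ (⌈Cm t / θ⌉ : ℝ) * θ := mul_le_mul_of_nonneg_right hle hθ.le
  obtain ⟨⟨⟨m, hm⟩, hCmSU, hCSU⟩, _⟩ := hSU t ht n0 h1 h2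
  by_contra hlt
  push_neg at hlt
  have hmono : ∀ u v : ℝ, Cm t ≤ u → u ≤ v → C t u ≤ C t v := by
    intro u v hu huv
    rcases eq_or_lt_of_le huv with rfl | hlt'
    · exact le_rfl
    rcases eq_or_lt_of_le hu with rfl | hu'
    · exact (hCm t ht).1 v
    have hden : 0 < v - Cm t := by linarith
    set a : ℝ := (v - u) / (v - Cm t) with hadef
    set b : ℝ := (u - Cm t) / (v - Cm t) with hbdef
    have ha : 0 ≤ a := div_nonneg (by linarith) hden.le
    have hbpos : 0 < b := div_pos (by linarith) hden
    have hab : a + b = 1 := by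
      rw [hadef, hbdef]
      field_simp
      ring
    have hcomb : a • Cm t + b • v = u := by
      simp only [smul_eq_mul, hadef, hbdef]
      field_simp
      ring
    have hconv := (hCconv t ht).2 (Set.mem_univ (Cm t)) (Set.mem_univ v) ha hbpos.le hab
    rw [hcomb] at hconv
    simp only [smul_eq_mul] at hconv
    have hCmu : C t (Cm t) ≤ C t u := (hCm t ht).1 u
    have e1 : a * C t (Cm t) ≤ a * C t u := mul_le_mul_of_nonneg_left hCmu ha
    have e0 : a * C t u + b * C t u = C t u := by rw [← add_mul, hab, one_mul]
    have e2 : b * C t u ≤ b * C t v := by linarith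
    exact (mul_le_mul_iff_right₀ hbpos).1 e2
  have hzS : (n0 : ℝ) * θ ≤ S := by linarith
  have hkey : Hstar t ((n0 : ℝ) * θ) < Hstar t S := by
    have hHK' := hHK ((n0 : ℝ) * θ) S hzS
    have hCS : C t (SU t) ≤ C t S := hmono (SU t) S hCmSU hlt.le
    linarith
  exact absurd (hS.1 ((n0 : ℝ) * θ)) (not_le.2 hkey)
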